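/- Let η : X → [0,γ] be a quasi-ordinal decomposition of X and, for each ordinal α ≤ γ, let g_α be a continuous selection for 𝓕(η⁻¹(α)). Suppose that for every limit ordinal λ ≤ γ there is a point q_λ ∈ η⁻¹(λ) such that η⁻¹(λ) is clopen modulo q_λ and g_λ is a q_λ-maximal selection for 𝓕(η⁻¹(λ)). Then the map f : 𝓕(X) → X defined by f(S) = g_{μ(S)}(S ∩ η⁻¹(μ(S))), where μ(S) = min η(S), is a continuous selection for 𝓕(X). -/

import Mathlib

open Set Topology Filter

universe u v

/-- The hyperspace `𝓕(X)` of all nonempty closed subsets of a topological space `X`. -/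
structure NEClosed (X : Type u) [TopologicalSpace X] : Type u where
  carrier : Set X
  nonempty' : carrier.Nonempty
  closed' : IsClosed carrier

namespace NEClosed

variable {X : Type u} [TopologicalSpace X]

/-- The basic Vietoris set `⟨𝒱⟩` determined by a family `𝒱` of subsets of `X`. -/
def basicSet (𝒱 : Set (Set X)) : Set (NEClosed X) :=
  {S | S.carrier ⊆ ⋃₀ 𝒱 ∧ ∀ V ∈ 𝒱, (S.carrier ∩ V).Nonempty}

/-- The Vietoris topology on `𝓕(X)`, generated by the sets `⟨𝒱⟩` where `𝒱` runs over the
finite families of open subsets of `X`. -/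
instance : TopologicalSpace (NEClosed X) :=
  TopologicalSpace.generateFrom
    {t | ∃ 𝒱 : Set (Set X), 𝒱.Finite ∧ (∀ V ∈ 𝒱, IsOpen V) ∧ t = basicSet 𝒱}

/-- The trace of a nonempty closed set `S` on a subspace `A` which it meets, as a nonempty
closed subset of `A`. -/
def trace (S : NEClosed X) (A : Set X) (h : (S.carrier ∩ A).Nonempty) : NEClosed A where
  carrier := Subtype.val ⁻¹' S.carrier
  nonempty' := ⟨⟨h.choose, h.choose_spec.2⟩, h.choose_spec.1⟩
  closed' := S.closed'.preimage continuous_subtype_val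

end NEClosed

/-- `f` is a Vietoris continuous selection for `𝓕(X)`. -/
def IsVSelection {X : Type u} [TopologicalSpace X] (f : NEClosed X → X) : Prop :=
  Continuous f ∧ ∀ S : NEClosed X, f S ∈ S.carrier

/-- `f` is a `p`-maximal selection: `f S = p` whenever `p ∈ S`. -/
def PMaximal {X : Type u} [TopologicalSpace X] (f : NEClosed X → X) (p : X) : Prop :=
  ∀ S : NEClosed X, p ∈ S.carrier → f S = p

/-- `f` is a `p`-minimal selection: `f S ≠ p` whenever `S ≠ {p}`. -/
def PMinimal {X : Type u} [TopologicalSpace X] (f : NEClosed X → X) (p : X) : Prop :=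
  ∀ S : NEClosed X, S.carrier ≠ {p} → f S ≠ p

/-- `H` is clopen modulo the point `p`: `H` is a nonempty closed set, `p ∈ H`, and
`H \ {p}` is open. -/
def ClopenModulo {X : Type u} [TopologicalSpace X] (H : Set X) (p : X) : Prop :=
  H.Nonempty ∧ IsClosed H ∧ p ∈ H ∧ IsOpen (H \ {p})

/-- `Δ(X)`: the family of all nonempty closed subsets of `X` clopen modulo some point. -/
def DeltaSet (X : Type u) [TopologicalSpace X] : Set (Set X) :=
  {H | ∃ p, ClopenModulo H p}

/-- `Δ_ω(X)`: all `H ∈ Δ(X)` such that `H` is clopen, or `H` is clopen modulo a point `q`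
at which `H` (with the subspace topology) has a countable neighbourhood base. -/
def DeltaOmegaSet (X : Type u) [TopologicalSpace X] : Set (Set X) :=
  {H | H ∈ DeltaSet X ∧ (IsClopen H ∨ ∃ q, ∃ hq : q ∈ H,
    ClopenModulo H q ∧ (𝓝 (⟨q, hq⟩ : H)).IsCountablyGenerated)}

/-- The set `[V]_f = {x : f(Vᶜ ∪ {x}) = x}` for an open set `V`. -/
def bracketSel {X : Type u} [TopologicalSpace X] [T1Space X]
    (f : NEClosed X → X) (V : Set X) (hV : IsOpen V) : Set X :=
  {x | f ⟨Vᶜ ∪ {x}, ⟨x, Or.inr rfl⟩, hV.isClosed_compl.union isClosed_singleton⟩ = x}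

/-- The set `⟨V⟩_f = [V]_f ∩ V` for an open set `V`. -/
def angleSel {X : Type u} [TopologicalSpace X] [T1Space X]
    (f : NEClosed X → X) (V : Set X) (hV : IsOpen V) : Set X :=
  bracketSel f V hV ∩ V

/-- A quasi-ordinal decomposition of `X`: a continuous surjection onto a compact ordinal
space `[0, γ]` all of whose fibers are clopen modulo a point. -/
def IsQuasiOrdDecomp {X : Type u} [TopologicalSpace X] (γ : Ordinal.{u})
    (η : X → Set.Iic γ) : Prop :=
  Continuous η ∧ Function.Surjective η ∧ ∀ α : Set.Iic γ, η ⁻¹' {α} ∈ DeltaSet X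

/-- An ordinal decomposition of `X`: a closed quotient map onto a compact ordinal space
`[0, γ]` all of whose fibers are clopen modulo a point. -/
def IsOrdDecomp {X : Type u} [TopologicalSpace X] (γ : Ordinal.{u})
    (η : X → Set.Iic γ) : Prop :=
  IsQuotientMap η ∧ IsClosedMap η ∧ ∀ α : Set.Iic γ, η ⁻¹' {α} ∈ DeltaSet X


section Aux

variable {Y : Type u} [TopologicalSpace Y]

lemma NEClosed.vietoris_basis :
    TopologicalSpace.IsTopologicalBasis
      {t : Set (NEClosed Y) | ∃ 𝒱 : Set (Set Y), 𝒱.Finite ∧ (∀ V ∈ 𝒱, IsOpen V) ∧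
        t = NEClosed.basicSet 𝒱} := by
  refine ⟨?_, ?_, rfl⟩
  · rintro t₁ ⟨𝒱, h𝒱f, h𝒱o, rfl⟩ t₂ ⟨𝒲, h𝒲f, h𝒲o, rfl⟩ S ⟨⟨hS1, hS2⟩, hS3, hS4⟩
    refine ⟨NEClosed.basicSet (((· ∩ ⋃₀ 𝒲) '' 𝒱) ∪ ((· ∩ ⋃₀ 𝒱) '' 𝒲)),
      ⟨_, (h𝒱f.image _).union (h𝒲f.image _), ?_, rfl⟩, ⟨?_, ?_⟩, ?_⟩
    · rintro V (⟨V₀, hV₀, rfl⟩ | ⟨V₀, hV₀, rfl⟩)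
      · exact (h𝒱o V₀ hV₀).inter (isOpen_sUnion fun t ht => h𝒲o t ht)
      · exact (h𝒲o V₀ hV₀).inter (isOpen_sUnion fun t ht => h𝒱o t ht)
    · intro x hx
      obtain ⟨V, hV, hxV⟩ := hS1 hx
      exact ⟨V ∩ ⋃₀ 𝒲, Or.inl ⟨V, hV, rfl⟩, hxV, hS3 hx⟩
    · rintro V (⟨V₀, hV₀, rfl⟩ | ⟨V₀, hV₀, rfl⟩)
      · obtain ⟨y, hyS, hyV⟩ := hS2 V₀ hV₀
        exact ⟨y, hyS, hyV, hS3 hyS⟩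
      · obtain ⟨y, hyS, hyV⟩ := hS4 V₀ hV₀
        exact ⟨y, hyS, hyV, hS1 hyS⟩
    · rintro S' ⟨hc, hm⟩
      constructor
      · constructor
        · intro x hx
          obtain ⟨V, hV, hxV⟩ := hc hx
          rcases hV with ⟨V₀, hV₀, rfl⟩ | ⟨V₀, hV₀, rfl⟩
          · exact ⟨V₀, hV₀, hxV.1⟩
          · exact hxV.2
        · intro V hV
          obtain ⟨y, hyS, hyV, _⟩ := hm (V ∩ ⋃₀ 𝒲) (Or.inl ⟨V, hV, rfl⟩)
          exact ⟨y, hyS, hyV⟩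
      · constructor
        · intro x hx
          obtain ⟨V, hV, hxV⟩ := hc hx
          rcases hV with ⟨V₀, hV₀, rfl⟩ | ⟨V₀, hV₀, rfl⟩
          · exact hxV.2
          · exact ⟨V₀, hV₀, hxV.1⟩
        · intro V hV
          obtain ⟨y, hyS, hyV, _⟩ := hm (V ∩ ⋃₀ 𝒱) (Or.inr ⟨V, hV, rfl⟩)
          exact ⟨y, hyS, hyV⟩
  · apply Set.eq_univ_of_forall
    intro S
    refine ⟨NEClosed.basicSet {Set.univ}, ⟨{Set.univ}, Set.finite_singleton _,
      by rintro V rfl; exact isOpen_univ, rfl⟩, ?_, ?_⟩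
    · intro x _; exact ⟨Set.univ, rfl, trivial⟩
    · rintro V rfl
      obtain ⟨y, hy⟩ := S.nonempty'
      exact ⟨y, hy, trivial⟩

lemma exists_min_iic {γ : Ordinal.{u}} (A : Set (Set.Iic γ)) (hA : A.Nonempty) :
    ∃ μ ∈ A, ∀ α ∈ A, μ ≤ α := by
  obtain ⟨a, ha⟩ := hA
  obtain ⟨o, ho, hmin⟩ := Ordinal.lt_wf.has_min (Subtype.val '' A)
    ⟨a.val, Set.mem_image_of_mem _ ha⟩
  obtain ⟨μ, hμA, hμo⟩ := ho
  refine ⟨μ, hμA, fun α hα => ?_⟩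
  have := hmin α.val (Set.mem_image_of_mem _ hα)
  rw [← hμo] at this
  exact Subtype.coe_le_coe.mp (not_lt.mp this)

end Aux

/-- Selections generated by a quasi-ordinal decomposition, using the min of the image:
if each limit fiber carries a point-maximal selection at the point modulo which the fiber is
clopen, the glued selection `f(S) = g_{min η(S)}(S ∩ η⁻¹(min η(S)))` is continuous. -/
theorem stmt_1 {X : Type u} [TopologicalSpace X] [T2Space X] (γ : Ordinal.{u})
    (η : X → Set.Iic γ) (hη : IsQuasiOrdDecomp γ η)
    (g : (α : Set.Iic γ) → NEClosed (η ⁻¹' {α}) → (η ⁻¹' {α}))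
    (hg : ∀ α : Set.Iic γ, Continuous (g α) ∧ ∀ T, g α T ∈ T.carrier)
    (hmax : ∀ (l : Ordinal.{u}) (hl : l ≤ γ), Order.IsSuccLimit l →
      ∃ q : (η ⁻¹' {(⟨l, hl⟩ : Set.Iic γ)}),
        ClopenModulo (η ⁻¹' {(⟨l, hl⟩ : Set.Iic γ)}) (q : X) ∧
        PMaximal (g ⟨l, hl⟩) q)
    (f : NEClosed X → X)
    (hf : ∀ (S : NEClosed X) (μ : Set.Iic γ) (hμ : μ ∈ η '' S.carrier),
      (∀ α ∈ η '' S.carrier, μ ≤ α) →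
      f S = (g μ (S.trace (η ⁻¹' {μ})
        (by rcases hμ with ⟨x, hxS, hxμ⟩; exact ⟨x, hxS, hxμ⟩)) : X)) :
    IsVSelection f := by
  classical
  have hcont : Continuous η := hη.1
  have hsel : ∀ S : NEClosed X, f S ∈ S.carrier := by
    intro S
    obtain ⟨μ, hμmem, hμlb⟩ := exists_min_iic (η '' S.carrier) (S.nonempty'.image η)
    rw [hf S μ hμmem hμlb]
    have prf : (S.carrier ∩ η ⁻¹' {μ}).Nonempty := by
      rcases hμmem with ⟨x, hxS, hxμ⟩; exact ⟨x, hxS, hxμ⟩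
    exact (hg μ).2 (S.trace (η ⁻¹' {μ}) prf)
  refine ⟨?_, hsel⟩
  rw [continuous_def]
  intro W hW
  rw [isOpen_iff_forall_mem_open]
  intro S hSW
  have hSW' : f S ∈ W := hSW
  -- f S' lies in the minimal fiber
  have hval : ∀ (S' : NEClosed X) (μ' : Set.Iic γ), μ' ∈ η '' S'.carrier →
      (∀ α ∈ η '' S'.carrier, μ' ≤ α) → f S' ∈ S'.carrier ∩ η ⁻¹' {μ'} := by
    intro S' μ' hmem hlb
    rw [hf S' μ' hmem hlb]
    have prf : (S'.carrier ∩ η ⁻¹' {μ'}).Nonempty := by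
      rcases hmem with ⟨x, hxS, hxμ⟩; exact ⟨x, hxS, hxμ⟩
    exact ⟨(hg μ').2 (S'.trace (η ⁻¹' {μ'}) prf), (g μ' (S'.trace (η ⁻¹' {μ'}) prf)).2⟩
  -- core lemma: if the minimal trace is in a good basic set, f S' ∈ W
  have core : ∀ (S' : NEClosed X) (μ' : Set.Iic γ), μ' ∈ η '' S'.carrier →
      (∀ α ∈ η '' S'.carrier, μ' ≤ α) → ∀ 𝒢 : Set (Set X),
      (S'.carrier ∩ η ⁻¹' {μ'} ⊆ ⋃₀ 𝒢) →
      (∀ G ∈ 𝒢, (S'.carrier ∩ η ⁻¹' {μ'} ∩ G).Nonempty) →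
      (NEClosed.basicSet ((fun G => (Subtype.val ⁻¹' G : Set (η ⁻¹' {μ'}))) '' 𝒢)
        ⊆ (g μ') ⁻¹' (Subtype.val ⁻¹' W)) →
      f S' ∈ W := by
    intro S' μ' hmem hlb 𝒢 hcov hmeets hbas
    rw [hf S' μ' hmem hlb]
    have prf : (S'.carrier ∩ η ⁻¹' {μ'}).Nonempty := by
      rcases hmem with ⟨x, hxS, hxμ⟩; exact ⟨x, hxS, hxμ⟩
    have hmemb : S'.trace (η ⁻¹' {μ'}) prf
        ∈ NEClosed.basicSet ((fun G => (Subtype.val ⁻¹' G : Set (η ⁻¹' {μ'}))) '' 𝒢) := by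
      constructor
      · rintro ⟨x, hxF⟩ hx
        obtain ⟨G, hG, hxG⟩ := hcov ⟨hx, hxF⟩
        exact ⟨Subtype.val ⁻¹' G, ⟨G, hG, rfl⟩, hxG⟩
      · rintro V ⟨G, hG, rfl⟩
        obtain ⟨y, ⟨hyS, hyF⟩, hyG⟩ := hmeets G hG
        exact ⟨⟨y, hyF⟩, hyS, hyG⟩
    exact hbas hmemb
  -- set up the minimal fiber of S
  obtain ⟨μ, hμmem, hμlb⟩ := exists_min_iic (η '' S.carrier) (S.nonempty'.image η)
  have hTdef : (S.carrier ∩ η ⁻¹' {μ}).Nonempty := by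
    rcases hμmem with ⟨x, hxS, hxμ⟩; exact ⟨x, hxS, hxμ⟩
  have hgT : S.trace (η ⁻¹' {μ}) hTdef ∈ (g μ) ⁻¹' (Subtype.val ⁻¹' W) := by
    rw [hf S μ hμmem hμlb] at hSW'
    exact hSW'
  have hopenT : IsOpen ((g μ) ⁻¹' (Subtype.val ⁻¹' W)) :=
    (hW.preimage continuous_subtype_val).preimage (hg μ).1
  obtain ⟨t, ⟨𝒲, h𝒲f, h𝒲o, rfl⟩, hTt, htsub⟩ :=
    NEClosed.vietoris_basis.exists_subset_of_mem_open hgT hopenT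
  choose! Vt hVto hVteq using fun w (hw : w ∈ 𝒲) => isOpen_induced_iff.mp (h𝒲o w hw)
  have h𝒢₀f : (Vt '' 𝒲).Finite := h𝒲f.image _
  have h𝒢₀o : ∀ G ∈ Vt '' 𝒲, IsOpen G := by
    rintro G ⟨w, hw, rfl⟩; exact hVto w hw
  have hTcov : S.carrier ∩ η ⁻¹' {μ} ⊆ ⋃₀ (Vt '' 𝒲) := by
    rintro x ⟨hxS, hxF⟩
    obtain ⟨w, hw, hxw⟩ := hTt.1 (show (⟨x, hxF⟩ : (η ⁻¹' {μ})) ∈ Subtype.val ⁻¹' S.carrier from hxS)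
    refine ⟨Vt w, ⟨w, hw, rfl⟩, ?_⟩
    rw [← hVteq w hw] at hxw
    exact hxw
  have hTmeets : ∀ w ∈ 𝒲, (S.carrier ∩ η ⁻¹' {μ} ∩ Vt w).Nonempty := by
    intro w hw
    obtain ⟨y, hyT, hyw⟩ := hTt.2 w hw
    rw [← hVteq w hw] at hyw
    exact ⟨y.val, ⟨hyT, y.2⟩, hyw⟩
  have hbas0 : NEClosed.basicSet ((fun G => (Subtype.val ⁻¹' G : Set (η ⁻¹' {μ}))) '' (Vt '' 𝒲))
      ⊆ (g μ) ⁻¹' (Subtype.val ⁻¹' W) := by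
    have himg : (fun G => (Subtype.val ⁻¹' G : Set (η ⁻¹' {μ}))) '' (Vt '' 𝒲) = 𝒲 := by
      ext w
      constructor
      · rintro ⟨G, ⟨w', hw', rfl⟩, rfl⟩
        show Subtype.val ⁻¹' (Vt w') ∈ 𝒲
        rw [hVteq w' hw']; exact hw'
      · intro hw
        exact ⟨Vt w, ⟨w, hw, rfl⟩, hVteq w hw⟩
    rw [himg]; exact htsub
  have h𝒲ne : ∃ w, w ∈ 𝒲 := by
    obtain ⟨x, hxS, hxF⟩ := hTdef
    obtain ⟨G, ⟨w, hw, _⟩, _⟩ := hTcov ⟨hxS, hxF⟩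
    exact ⟨w, hw⟩
  -- ordinal-topology facts
  have hIoi : IsOpen (η ⁻¹' {β : Set.Iic γ | μ < β}) := by
    have h2 : {β : Set.Iic γ | μ < β} = Subtype.val ⁻¹' Set.Ioi μ.val := by
      ext β
      simp only [Set.mem_setOf_eq, Set.mem_preimage, Set.mem_Ioi]
      exact Subtype.coe_lt_coe.symm
    exact (h2 ▸ (isOpen_Ioi.preimage continuous_subtype_val)).preimage hcont
  have hIic : IsOpen (η ⁻¹' {β : Set.Iic γ | β ≤ μ}) := by
    have h2 : {β : Set.Iic γ | β ≤ μ} = Subtype.val ⁻¹' Set.Iio (Order.succ μ.val) := by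
      ext β
      simp only [Set.mem_setOf_eq, Set.mem_preimage, Set.mem_Iio]
      exact ⟨fun h => Order.lt_succ_iff.mpr (Subtype.coe_le_coe.mpr h),
             fun h => Subtype.coe_le_coe.mp (Order.lt_succ_iff.mp h)⟩
    exact (h2 ▸ (isOpen_Iio.preimage continuous_subtype_val)).preimage hcont
  have hFc : IsClosed (η ⁻¹' {μ}) := isClosed_singleton.preimage hcont
  -- the generic construction for an open E with S ∩ η⁻¹{μ} ⊆ E ⊆ η⁻¹{μ}
  have main : ∀ E : Set X, IsOpen E → E ⊆ η ⁻¹' {μ} → S.carrier ∩ η ⁻¹' {μ} ⊆ E →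
      ∃ t ⊆ f ⁻¹' W, IsOpen t ∧ S ∈ t := by
    intro E hEo hEF hSE
    refine ⟨NEClosed.basicSet
      (insert (η ⁻¹' {β : Set.Iic γ | μ < β} ∪ ⋃₀ ((· ∩ E) '' (Vt '' 𝒲)))
        ((· ∩ E) '' (Vt '' 𝒲))), ?_, NEClosed.vietoris_basis.isOpen ⟨_, ?_, ?_, rfl⟩, ⟨?_, ?_⟩⟩
    · -- the basic set is contained in f ⁻¹' W
      rintro S' ⟨hc', hm'⟩
      show f S' ∈ W
      obtain ⟨μ', hμ'mem, hμ'lb⟩ := exists_min_iic (η '' S'.carrier) (S'.nonempty'.image η)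
      have hS'F : ∀ x ∈ S'.carrier, η x = μ ∨ μ < η x := by
        intro x hx
        obtain ⟨V, hV, hxV⟩ := hc' hx
        rcases Set.mem_insert_iff.mp hV with rfl | ⟨G, hG, rfl⟩
        · rcases hxV with h | ⟨u, ⟨G, hG, rfl⟩, hxu⟩
          · exact Or.inr h
          · exact Or.inl (hEF hxu.2)
        · exact Or.inl (hEF hxV.2)
      have hμ'eq : μ' = μ := by
        obtain ⟨w₀, hw₀⟩ := h𝒲ne
        obtain ⟨y, hyS', hyV, hyE⟩ := hm' (Vt w₀ ∩ E)
          (Set.mem_insert_of_mem _ ⟨Vt w₀, ⟨w₀, hw₀, rfl⟩, rfl⟩)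
        have h1 : η y = μ := hEF hyE
        have h2 : μ' ≤ μ := h1 ▸ hμ'lb (η y) ⟨y, hyS', rfl⟩
        have h3 : μ ≤ μ' := by
          obtain ⟨x, hxS', hxμ'⟩ := hμ'mem
          rcases hS'F x hxS' with h | h
          · exact le_of_eq (by rw [← hxμ', h])
          · exact le_of_lt (hxμ' ▸ h)
        exact le_antisymm h2 h3
      subst hμ'eq
      refine core S' μ' hμ'mem hμ'lb (Vt '' 𝒲) ?_ ?_ hbas0
      · rintro x ⟨hxS', hxF⟩
        obtain ⟨V, hV, hxV⟩ := hc' hxS'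
        rcases Set.mem_insert_iff.mp hV with rfl | ⟨G, hG, rfl⟩
        · rcases hxV with h | ⟨u, ⟨G, hG, rfl⟩, hxu⟩
          · exact absurd (hxF : η x = μ') (ne_of_gt h)
          · exact ⟨G, hG, hxu.1⟩
        · exact ⟨G, hG, hxV.1⟩
      · rintro G ⟨w, hw, rfl⟩
        obtain ⟨y, hyS', hyV, hyE⟩ := hm' (Vt w ∩ E)
          (Set.mem_insert_of_mem _ ⟨Vt w, ⟨w, hw, rfl⟩, rfl⟩)
        exact ⟨y, ⟨hyS', hEF hyE⟩, hyV⟩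
    · -- finiteness
      exact (h𝒢₀f.image _).insert _
    · -- openness
      rintro V hV
      rcases Set.mem_insert_iff.mp hV with rfl | ⟨G, hG, rfl⟩
      · exact hIoi.union (isOpen_sUnion (by rintro u ⟨G, hG, rfl⟩; exact (h𝒢₀o G hG).inter hEo))
      · exact (h𝒢₀o G hG).inter hEo
    · -- S is covered
      intro x hx
      have hμx : μ ≤ η x := hμlb (η x) ⟨x, hx, rfl⟩
      rcases lt_or_eq_of_le hμx with hlt | heq
      · exact ⟨_, Set.mem_insert _ _, Or.inl hlt⟩
      · obtain ⟨G, hG, hxG⟩ := hTcov ⟨hx, heq.symm⟩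
        exact ⟨G ∩ E, Set.mem_insert_of_mem _ ⟨G, hG, rfl⟩, hxG, hSE ⟨hx, heq.symm⟩⟩
    · -- S meets every member
      rintro V hV
      rcases Set.mem_insert_iff.mp hV with rfl | ⟨G, ⟨w, hw, rfl⟩, rfl⟩
      · obtain ⟨w₀, hw₀⟩ := h𝒲ne
        obtain ⟨y, ⟨hyS, hyF⟩, hyV⟩ := hTmeets w₀ hw₀
        exact ⟨y, hyS, Or.inr ⟨Vt w₀ ∩ E, ⟨Vt w₀, ⟨w₀, hw₀, rfl⟩, rfl⟩, hyV, hSE ⟨hyS, hyF⟩⟩⟩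
      · obtain ⟨y, ⟨hyS, hyF⟩, hyV⟩ := hTmeets w hw
        exact ⟨y, hyS, hyV, hSE ⟨hyS, hyF⟩⟩
  -- case analysis on μ
  rcases Ordinal.zero_or_succ_or_isSuccLimit μ.val with h0 | ⟨p, hp⟩ | hlim
  · -- μ = 0 : the fiber is open
    have hFo : IsOpen (η ⁻¹' {μ}) := by
      have heq : {β : Set.Iic γ | β ≤ μ} = {μ} := by
        ext β
        simp only [Set.mem_setOf_eq, Set.mem_singleton_iff]
        constructor
        · intro h
          have hβ : β.val ≤ 0 := h0 ▸ Subtype.coe_le_coe.mpr h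
          exact Subtype.ext (by rw [nonpos_iff_eq_zero.mp hβ, h0])
        · rintro rfl; exact le_refl _
      rw [show η ⁻¹' {μ} = η ⁻¹' {β : Set.Iic γ | β ≤ μ} by rw [heq]]
      exact hIic
    exact main (η ⁻¹' {μ}) hFo subset_rfl (fun x hx => hx.2)
  · -- μ successor : the fiber is open
    have hFo : IsOpen (η ⁻¹' {μ}) := by
      have h1 : IsOpen {β : Set.Iic γ | p < (β : Ordinal)} :=
        isOpen_Ioi.preimage continuous_subtype_val
      have h2 : η ⁻¹' {μ} =
          η ⁻¹' {β : Set.Iic γ | β ≤ μ} ∩ η ⁻¹' {β : Set.Iic γ | p < (β : Ordinal)} := by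
        ext x
        simp only [Set.mem_preimage, Set.mem_singleton_iff, Set.mem_inter_iff, Set.mem_setOf_eq]
        constructor
        · intro h
          rw [h]
          exact ⟨le_refl _, by rw [← hp]; exact Order.lt_succ p⟩
        · rintro ⟨hle, hgt⟩
          refine Subtype.ext (le_antisymm (Subtype.coe_le_coe.mpr hle) ?_)
          rw [← hp]
          exact Order.succ_le_of_lt hgt
      rw [h2]
      exact hIic.inter (h1.preimage hcont)
    exact main (η ⁻¹' {μ}) hFo subset_rfl (fun x hx => hx.2)
  · -- μ limit
    obtain ⟨q, hqcm, hqmax⟩ := hmax μ.val μ.2 hlim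
    by_cases hqS : (q : X) ∈ S.carrier
    · -- q ∈ S : f S = q
      have hfq : g μ (S.trace (η ⁻¹' {μ}) hTdef) = q := hqmax _ hqS
      have hqW : (q : X) ∈ W := by
        rw [hf S μ hμmem hμlb] at hSW'
        rw [← congrArg Subtype.val hfq]
        exact hSW'
      set K : Set X := ⋂₀ {G ∈ Vt '' 𝒲 | (q : X) ∈ G} with hK
      have hKo : IsOpen K := Set.Finite.isOpen_sInter (h𝒢₀f.subset (Set.sep_subset _ _))
        (fun G hG => h𝒢₀o G hG.1)
      have hqK : (q : X) ∈ K := fun G hG => hG.2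
      obtain ⟨G₀, hG₀, hqG₀⟩ : ∃ G ∈ Vt '' 𝒲, (q : X) ∈ G := by
        obtain ⟨G, hG, hqG⟩ := hTcov ⟨hqS, q.2⟩
        exact ⟨G, hG, hqG⟩
      set A : Set X := W ∩ η ⁻¹' {β : Set.Iic γ | β ≤ μ} ∩ ((η ⁻¹' {μ})ᶜ ∪ K) with hA
      have hAo : IsOpen A := (hW.inter hIic).inter (hFc.isOpen_compl.union hKo)
      have hqA : (q : X) ∈ A := ⟨⟨hqW, le_of_eq (q.2 : η (q : X) = μ)⟩, Or.inr hqK⟩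
      set E : Set X := η ⁻¹' {μ} \ {(q : X)} with hE
      have hEo : IsOpen E := hqcm.2.2.2
      refine ⟨NEClosed.basicSet
        (insert (η ⁻¹' {β : Set.Iic γ | μ < β} ∪ ⋃₀ ((· ∩ E) '' (Vt '' 𝒲)) ∪ A)
          (insert A ((· ∩ E) '' {G ∈ Vt '' 𝒲 | (q : X) ∉ G}))), ?_,
        NEClosed.vietoris_basis.isOpen ⟨_, ?_, ?_, rfl⟩, ⟨?_, ?_⟩⟩
      · -- contained in f ⁻¹' W
        rintro S' ⟨hc', hm'⟩
        show f S' ∈ W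
        obtain ⟨μ', hμ'mem, hμ'lb⟩ := exists_min_iic (η '' S'.carrier) (S'.nonempty'.image η)
        have hAle : μ' ≤ μ := by
          obtain ⟨a, haS', haA⟩ := hm' A (Set.mem_insert_of_mem _ (Set.mem_insert _ _))
          exact le_trans (hμ'lb (η a) ⟨a, haS', rfl⟩) haA.1.2
        rcases lt_or_eq_of_le hAle with hlt | heq
        · -- μ' < μ : every point of the minimal fiber of S' lies in W
          have hsub : ∀ x ∈ S'.carrier, η x = μ' → x ∈ W := by
            intro x hxS' hxμ'
            have hxlt : η x < μ := hxμ' ▸ hlt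
            obtain ⟨V, hV, hxV⟩ := hc' hxS'
            rcases Set.mem_insert_iff.mp hV with rfl | hV
            · rcases hxV with (h | ⟨u, ⟨G, hG, rfl⟩, hxu⟩) | hxA
              · exact absurd (lt_trans h hxlt) (lt_irrefl μ)
              · exact absurd (hxu.2.1 : η x = μ) (ne_of_lt hxlt)
              · exact hxA.1.1
            rcases Set.mem_insert_iff.mp hV with rfl | ⟨G, hG, rfl⟩
            · exact hxV.1.1
            · exact absurd (hxV.2.1 : η x = μ) (ne_of_lt hxlt)
          have hv := hval S' μ' hμ'mem hμ'lb
          exact hsub _ hv.1 hv.2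
        · -- μ' = μ
          subst heq
          refine core S' μ' hμ'mem hμ'lb (Vt '' 𝒲) ?_ ?_ hbas0
          · rintro x ⟨hxS', hxF⟩
            have hxK : x ∈ A → ∃ G ∈ Vt '' 𝒲, x ∈ G := by
              intro hxA
              rcases hxA.2 with h | h
              · exact absurd hxF h
              · exact ⟨G₀, hG₀, h G₀ ⟨hG₀, hqG₀⟩⟩
            obtain ⟨V, hV, hxV⟩ := hc' hxS'
            rcases Set.mem_insert_iff.mp hV with rfl | hV
            · rcases hxV with (h | ⟨u, ⟨G, hG, rfl⟩, hxu⟩) | hxA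
              · exact absurd (hxF : η x = μ') (ne_of_gt h)
              · exact ⟨G, hG, hxu.1⟩
              · exact hxK hxA
            rcases Set.mem_insert_iff.mp hV with rfl | ⟨G, hG, rfl⟩
            · exact hxK hxV
            · exact ⟨G, hG.1, hxV.1⟩
          · rintro G ⟨w, hw, rfl⟩
            by_cases hqG : (q : X) ∈ Vt w
            · obtain ⟨a, haS', haA⟩ := hm' A (Set.mem_insert_of_mem _ (Set.mem_insert _ _))
              have haF : η a = μ' := le_antisymm haA.1.2 (hμ'lb (η a) ⟨a, haS', rfl⟩)
              have haK : a ∈ K := by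
                rcases haA.2 with h | h
                · exact absurd (haF : a ∈ η ⁻¹' {μ'}) h
                · exact h
              exact ⟨a, ⟨haS', haF⟩, haK (Vt w) ⟨⟨w, hw, rfl⟩, hqG⟩⟩
            · obtain ⟨y, hyS', hyV, hyE⟩ := hm' (Vt w ∩ E)
                (Set.mem_insert_of_mem _ (Set.mem_insert_of_mem _
                  ⟨Vt w, ⟨⟨w, hw, rfl⟩, hqG⟩, rfl⟩))
              exact ⟨y, ⟨hyS', hyE.1⟩, hyV⟩
      · -- finiteness
        exact ((((h𝒢₀f.subset (Set.sep_subset _ _)).image _).insert _).insert _)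
      · -- openness
        rintro V hV
        rcases Set.mem_insert_iff.mp hV with rfl | hV
        · exact (hIoi.union (isOpen_sUnion
            (by rintro u ⟨G, hG, rfl⟩; exact (h𝒢₀o G hG).inter hEo))).union hAo
        rcases Set.mem_insert_iff.mp hV with rfl | ⟨G, hG, rfl⟩
        · exact hAo
        · exact (h𝒢₀o G hG.1).inter hEo
      · -- S is covered
        intro x hx
        have hμx : μ ≤ η x := hμlb (η x) ⟨x, hx, rfl⟩
        rcases lt_or_eq_of_le hμx with hlt | heq
        · exact ⟨_, Set.mem_insert _ _, Or.inl (Or.inl hlt)⟩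
        · by_cases hxq : x = (q : X)
          · exact ⟨A, Set.mem_insert_of_mem _ (Set.mem_insert _ _), hxq ▸ hqA⟩
          · obtain ⟨G, hG, hxG⟩ := hTcov ⟨hx, heq.symm⟩
            exact ⟨_, Set.mem_insert _ _,
              Or.inl (Or.inr ⟨G ∩ E, ⟨G, hG, rfl⟩, hxG, heq.symm, hxq⟩)⟩
      · -- S meets every member
        rintro V hV
        rcases Set.mem_insert_iff.mp hV with rfl | hV
        · exact ⟨(q : X), hqS, Or.inr hqA⟩
        rcases Set.mem_insert_iff.mp hV with rfl | ⟨G, hG, rfl⟩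
        · exact ⟨(q : X), hqS, hqA⟩
        · obtain ⟨⟨w, hw, rfl⟩, hqG⟩ := hG
          obtain ⟨y, ⟨hyS, hyF⟩, hyV⟩ := hTmeets w hw
          exact ⟨y, hyS, hyV, hyF, fun hyq => hqG (hyq ▸ hyV)⟩
    · -- q ∉ S
      refine main (η ⁻¹' {μ} \ {(q : X)}) hqcm.2.2.2 diff_subset ?_
      rintro x ⟨hxS, hxF⟩
      exact ⟨hxF, fun hxq => hqS (hxq ▸ hxS)⟩
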